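/- Let μ be a measure on a measurable space X, let 2 < q < q′ < ∞, and let A, B > 0. Let f be a measurable function on X with f ∈ L²(μ) ∩ L^{q′}(μ) and ‖f‖_{L²(μ)} = 1, and let D ≥ 0 be a real number satisfying D ≤ A ‖f‖²_{L^q(μ)} and ‖f‖²_{L^{q′}(μ)} ≤ B (1 + D). Then there exists a constant C > 0 depending only on A, B, q, q′ (and not on f, D, or μ) such that ‖f‖_{L^q(μ)} ≤ C and D ≤ C. -/

import Mathlib

open MeasureTheory ENNReal

lemma interp_aux {X : Type} [MeasurableSpace X] (μ : Measure X) (f : X → ℝ)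
    (hf : AEStronglyMeasurable f μ) (θ p₀ p₁ p : ℝ) (hθ0 : 0 < θ) (hθ1 : θ < 1)
    (hp₀ : 0 < p₀) (hp₁ : 0 < p₁) (hp0 : 0 < p) (hp : 1/p = θ/p₀ + (1-θ)/p₁) :
    eLpNorm f (ENNReal.ofReal p) μ ≤
      eLpNorm f (ENNReal.ofReal p₀) μ ^ θ * eLpNorm f (ENNReal.ofReal p₁) μ ^ (1-θ) := by
  have hθ1' : 0 < 1 - θ := by linarith
  have hg : AEStronglyMeasurable (fun x => ‖f x‖ ^ θ) μ :=
    (hf.norm.aemeasurable.pow_const θ).aestronglyMeasurable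
  have hh : AEStronglyMeasurable (fun x => ‖f x‖ ^ (1-θ)) μ :=
    (hf.norm.aemeasurable.pow_const (1-θ)).aestronglyMeasurable
  haveI : ENNReal.HolderTriple (ENNReal.ofReal (p₀/θ)) (ENNReal.ofReal (p₁/(1-θ)))
      (ENNReal.ofReal p) := ⟨by
      rw [← ENNReal.ofReal_inv_of_pos hp0,
        ← ENNReal.ofReal_inv_of_pos (by positivity), ← ENNReal.ofReal_inv_of_pos (by positivity),
        ← ENNReal.ofReal_add (by positivity) (by positivity)]
      congr 1
      rw [inv_div, inv_div]
      rw [one_div] at hp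
      linarith [hp]⟩
  have key := eLpNorm_le_eLpNorm_mul_eLpNorm'_of_norm (μ := μ)
    (r := ENNReal.ofReal p) (p := ENNReal.ofReal (p₀/θ)) (q := ENNReal.ofReal (p₁/(1-θ)))
    hg hh (fun a b => a * b) 1
    (Filter.Eventually.of_forall fun x => by
      simp [abs_mul, Real.norm_eq_abs, abs_of_nonneg (Real.rpow_nonneg (norm_nonneg _) _)])
  have hfn : (fun x => (fun a b => a * b) (‖f x‖ ^ θ) (‖f x‖ ^ (1-θ))) = fun x => ‖f x‖ := by
    funext x
    simp only
    rw [← Real.rpow_add' (norm_nonneg _) (by norm_num)]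
    simp
  rw [hfn, eLpNorm_norm] at key
  have h1 : eLpNorm (fun x => ‖f x‖ ^ θ) (ENNReal.ofReal (p₀/θ)) μ
      = eLpNorm f (ENNReal.ofReal p₀) μ ^ θ := by
    rw [eLpNorm_norm_rpow f hθ0, ← ENNReal.ofReal_mul (by positivity), div_mul_cancel₀ _ hθ0.ne']
  have h2 : eLpNorm (fun x => ‖f x‖ ^ (1-θ)) (ENNReal.ofReal (p₁/(1-θ))) μ
      = eLpNorm f (ENNReal.ofReal p₁) μ ^ (1-θ) := by
    rw [eLpNorm_norm_rpow f hθ1', ← ENNReal.ofReal_mul (by positivity),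
      div_mul_cancel₀ _ hθ1'.ne']
  rwa [h1, h2, ENNReal.coe_one, one_mul] at key

lemma rpow_aux (s K N : ℝ) (hs0 : 0 < s) (hs1 : s < 1) (hN : 1 < N)
    (h : N ^ (2:ℝ) ≤ K * N ^ (2*s)) : N ≤ K ^ (1/(2-2*s)) := by
  have hN0 : 0 < N := by linarith
  have hexp : 0 < 2 - 2*s := by linarith
  have h2 : N ^ (2 - 2*s) ≤ K := by
    rw [Real.rpow_sub hN0, div_le_iff₀ (Real.rpow_pos_of_pos hN0 _)]
    exact h
  calc N = (N ^ (2-2*s)) ^ (1/(2-2*s)) := by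
        rw [← Real.rpow_mul hN0.le, mul_one_div, div_self hexp.ne', Real.rpow_one]
    _ ≤ K ^ (1/(2-2*s)) :=
        Real.rpow_le_rpow (Real.rpow_nonneg hN0.le _) h2 (by positivity)

/-- Let `2 < q < q' < ∞` and `A, B > 0`. There is `C > 0`, depending only on
`A, B, q, q'`, such that for any measure `μ`, any measurable `f ∈ L²(μ) ∩ L^{q'}(μ)`
with `‖f‖_{L²} = 1`, and any `D ≥ 0` with `D ≤ A ‖f‖²_{L^q}` and
`‖f‖²_{L^{q'}} ≤ B (1 + D)`, one has `‖f‖_{L^q} ≤ C` and `D ≤ C`. -/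
theorem bounded_Lq_of_interpolation
    (q q' : ℝ) (hq : 2 < q) (hqq' : q < q') (A B : ℝ) (hA : 0 < A) (hB : 0 < B) :
    ∃ C > 0, ∀ (X : Type) (_ : MeasurableSpace X) (μ : Measure X) (f : X → ℝ)
      (D : ℝ), Measurable f →
      MemLp f 2 μ → MemLp f (ENNReal.ofReal q') μ →
      eLpNorm f 2 μ = 1 →
      0 ≤ D →
      D ≤ A * (eLpNorm f (ENNReal.ofReal q) μ).toReal ^ 2 →
      (eLpNorm f (ENNReal.ofReal q') μ).toReal ^ 2 ≤ B * (1 + D) →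
      (eLpNorm f (ENNReal.ofReal q) μ).toReal ≤ C ∧ D ≤ C := by
  have hq0 : 0 < q := by linarith
  have hq'0 : 0 < q' := by linarith
  have hq'2 : 2 < q' := by linarith
  set θ : ℝ := (1/q - 1/q') / (1/2 - 1/q') with hθdef
  have hd : 0 < 1/2 - 1/q' := by
    have : 1/q' < 1/2 := by
      rw [div_lt_div_iff₀ hq'0 two_pos]; linarith
    linarith
  have hn : 0 < 1/q - 1/q' := by
    have : 1/q' < 1/q := one_div_lt_one_div_of_lt hq0 hqq'
    linarith
  have hθ0 : 0 < θ := div_pos hn hd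
  have hθ1 : θ < 1 := by
    rw [hθdef, div_lt_one hd]
    have : 1/q < 1/2 := by
      rw [div_lt_div_iff₀ hq0 two_pos]; linarith
    linarith
  have hprod : θ * (1/2 - 1/q') = 1/q - 1/q' := div_mul_cancel₀ _ hd.ne'
  have hp : 1/q = θ/2 + (1-θ)/q' := by
    have h1 : θ/2 + (1-θ)/q' = θ * (1/2 - 1/q') + 1/q' := by ring
    rw [h1, hprod]; ring
  set s : ℝ := 1 - θ with hsdef
  have hs0 : 0 < s := by simp only [hsdef]; linarith
  have hs1 : s < 1 := by simp only [hsdef]; linarith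
  set K : ℝ := (B * (1 + A)) ^ s with hKdef
  have hK0 : 0 < K := Real.rpow_pos_of_pos (by nlinarith) s
  set Kb : ℝ := K ^ (1/(2-2*s)) with hKbdef
  set C₀ : ℝ := max 1 Kb with hC₀def
  have hC₀1 : (1:ℝ) ≤ C₀ := le_max_left _ _
  have hC₀0 : 0 < C₀ := by linarith
  refine ⟨C₀ + A * C₀ ^ 2, by nlinarith, ?_⟩
  intro X _ μ f D hmeas hmem2 hmem' hnorm2 hD0 hD1 hD2
  set N : ℝ := (eLpNorm f (ENNReal.ofReal q) μ).toReal with hNdef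
  set M : ℝ := (eLpNorm f (ENNReal.ofReal q') μ).toReal with hMdef
  have hN0 : 0 ≤ N := ENNReal.toReal_nonneg
  have hM0 : 0 ≤ M := ENNReal.toReal_nonneg
  -- interpolation
  have hE2 : ENNReal.ofReal 2 = (2 : ℝ≥0∞) := by norm_num
  have hkey := interp_aux μ f hmeas.aestronglyMeasurable θ 2 q' q hθ0 hθ1 two_pos hq'0 hq0 hp
  rw [hE2, hnorm2, ENNReal.one_rpow, one_mul] at hkey
  have hfin' : eLpNorm f (ENNReal.ofReal q') μ ≠ ∞ := hmem'.eLpNorm_ne_top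
  have hrfin : eLpNorm f (ENNReal.ofReal q') μ ^ (1-θ) ≠ ∞ :=
    ENNReal.rpow_ne_top_of_nonneg hs0.le hfin'
  have hNM : N ≤ M ^ s := by
    have := ENNReal.toReal_mono hrfin hkey
    rwa [← ENNReal.toReal_rpow] at this
  -- case split
  have hAC : 0 ≤ A * C₀ ^ 2 := by positivity
  rcases le_or_gt N 1 with hN1 | hN1
  · have hNC₀ : N ≤ C₀ := hN1.trans hC₀1
    constructor
    · linarith
    · have h1 : A * N ^ 2 ≤ A * C₀ ^ 2 := by gcongr
      linarith
  · have hNle : N ≤ Kb := by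
      apply rpow_aux s K N hs0 hs1 hN1
      have e1 : N ^ (2:ℝ) = N ^ (2:ℕ) := by
        rw [← Real.rpow_natCast N 2]; norm_num
      have e2 : M ^ (2:ℝ) = M ^ (2:ℕ) := by
        rw [← Real.rpow_natCast M 2]; norm_num
      have hN2 : 1 ≤ N ^ (2:ℕ) := one_le_pow₀ hN1.le
      have hM2 : M ^ (2:ℝ) ≤ B * (1 + A) * N ^ (2:ℝ) := by
        rw [e2, e1]
        nlinarith [mul_le_mul_of_nonneg_left hD1 hB.le,
          mul_le_mul_of_nonneg_left hN2 (mul_pos hB hA).le]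
      have hBA : (0:ℝ) ≤ B * (1 + A) := by positivity
      calc N ^ (2:ℝ) ≤ (M ^ s) ^ (2:ℝ) :=
            Real.rpow_le_rpow hN0 hNM (by norm_num)
        _ = (M ^ (2:ℝ)) ^ s := by
            rw [← Real.rpow_mul hM0, ← Real.rpow_mul hM0, mul_comm]
        _ ≤ (B * (1 + A) * N ^ (2:ℝ)) ^ s :=
            Real.rpow_le_rpow (by positivity) hM2 hs0.le
        _ = K * N ^ (2*s) := by
            rw [Real.mul_rpow hBA (by positivity), ← Real.rpow_mul (by linarith)]
    have hNC₀ : N ≤ C₀ := hNle.trans (le_max_right _ _)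
    constructor
    · linarith
    · have h1 : A * N ^ 2 ≤ A * C₀ ^ 2 := by gcongr
      linarith
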